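/- Let A be a smooth operator field on an open set U ⊆ ℝⁿ satisfying the spectral regularity assumption, with generalized eigen-distributions D₁, …, D_s, and suppose that τ⁽ᵐ⁾_A(X,Y)(x) = 0 for all smooth vector fields X, Y and all x ∈ U, for some integer m ≥ 1. Then for every nonempty subset S ⊆ {1, …, s}, the distribution x ↦ ⊕_{i∈S} D_i(x) is involutive. In particular each generalized eigen-distribution D_i is involutive. -/

import Mathlib

noncomputable section

/-- Points of ℝⁿ, modeled as `Fin n → ℝ`. -/
abbrev Vec (n : ℕ) := Fin n → ℝ

/-- Vector fields on (an open subset of) ℝⁿ. -/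
abbrev VF (n : ℕ) := Vec n → Vec n

/-- Operator fields: smooth (1,1)-tensor fields, i.e. maps U → (ℝⁿ →L[ℝ] ℝⁿ). -/
abbrev OpField (n : ℕ) := Vec n → (Vec n →L[ℝ] Vec n)

/-- Lie bracket of vector fields: [V,W](x) = DW(x)(V(x)) − DV(x)(W(x)). -/
noncomputable def lieBracket {n : ℕ} (V W : VF n) : VF n :=
  fun x => fderiv ℝ W x (V x) - fderiv ℝ V x (W x)

/-- Action of an operator field on a vector field: (A V)(x) = A(x)(V(x)). -/
noncomputable def opApp {n : ℕ} (A : OpField n) (V : VF n) : VF n := fun x => A x (V x)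

/-- Generalized Nijenhuis torsion of level m:
τ⁽⁰⁾_A(V,W) = [V,W] and
τ⁽ᵐ⁾_A(V,W) = A²τ⁽ᵐ⁻¹⁾_A(V,W) + τ⁽ᵐ⁻¹⁾_A(AV,AW) − A(τ⁽ᵐ⁻¹⁾_A(V,AW) + τ⁽ᵐ⁻¹⁾_A(AV,W)).
Level 1 is the Nijenhuis torsion, level 2 the Haantjes torsion. -/
noncomputable def genTorsion {n : ℕ} (A : OpField n) : ℕ → VF n → VF n → VF n
  | 0, V, W => lieBracket V W
  | (m+1), V, W => fun x =>
      A x (A x (genTorsion A m V W x))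
      + genTorsion A m (opApp A V) (opApp A W) x
      - A x (genTorsion A m V (opApp A W) x + genTorsion A m (opApp A V) W x)

/-- The generalized eigen-distribution `ker ((A(x) − λ(x)·Id)^ρ)`. -/
noncomputable def eigenDist {n : ℕ} (A : OpField n) (lam : Vec n → ℝ) (ρ : ℕ)
    (x : Vec n) : Submodule ℝ (Vec n) :=
  LinearMap.ker (((A x - lam x • 1) ^ ρ : Vec n →L[ℝ] Vec n) : Vec n →ₗ[ℝ] Vec n)

namespace EigAux

open Polynomial

variable {n : ℕ}

/-- Evaluate a polynomial at the operator `A x`. -/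
noncomputable def ev (A : OpField n) (x : Vec n) (p : ℝ[X]) : Vec n →L[ℝ] Vec n :=
  aeval (A x) p

lemma ev_mul_apply (A : OpField n) (x : Vec n) (p q : ℝ[X]) (v : Vec n) :
    ev A x (p * q) v = ev A x p (ev A x q v) := by
  rw [ev, map_mul]; rfl

lemma ev_X_sub_C (A : OpField n) (x : Vec n) (c : ℝ) :
    ev A x (X - C c) = A x - c • 1 := by
  simp [ev, Algebra.algebraMap_eq_smul_one]

lemma ev_one_apply (A : OpField n) (x : Vec n) (v : Vec n) : ev A x 1 v = v := by
  simp [ev]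

lemma ev_dvd_zero (A : OpField n) (x : Vec n) {p q : ℝ[X]} (h : p ∣ q) {v : Vec n}
    (hv : ev A x p v = 0) : ev A x q v = 0 := by
  obtain ⟨r, rfl⟩ := h
  rw [mul_comm, ev_mul_apply, hv, map_zero]

/-- Span of the `A`-orbit of the value of `Z` at `x`. -/
noncomputable def pSpan (A : OpField n) (Z : VF n) (x : Vec n) : Submodule ℝ (Vec n) :=
  Submodule.span ℝ (Set.range fun p : ℕ => ((A x) ^ p) (Z x))

lemma self_mem_pSpan (A : OpField n) (Z : VF n) (x : Vec n) : Z x ∈ pSpan A Z x :=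
  Submodule.subset_span ⟨0, by simp⟩

lemma apply_mem_pSpan {A : OpField n} {Z : VF n} {x : Vec n} {v : Vec n}
    (hv : v ∈ pSpan A Z x) : A x v ∈ pSpan A Z x := by
  induction hv using Submodule.span_induction with
  | mem v hv =>
      obtain ⟨p, rfl⟩ := hv
      refine Submodule.subset_span ⟨p + 1, ?_⟩
      show (A x ^ (p+1)) (Z x) = A x ((A x ^ p) (Z x))
      rw [pow_succ', ContinuousLinearMap.mul_apply]
  | zero => simpa using Submodule.zero_mem _
  | add u v _ _ hu hv => simpa [map_add] using Submodule.add_mem _ hu hv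
  | smul c v _ hv => simpa [map_smul] using Submodule.smul_mem _ c hv

lemma pSpan_opApp_le (A : OpField n) (Z : VF n) (x : Vec n) :
    pSpan A (opApp A Z) x ≤ pSpan A Z x := by
  rw [pSpan, Submodule.span_le]
  rintro v ⟨p, rfl⟩
  refine Submodule.subset_span ⟨p + 1, ?_⟩
  show (A x ^ (p+1)) (Z x) = (A x ^ p) (opApp A Z x)
  rw [pow_succ, ContinuousLinearMap.mul_apply]; rfl

lemma pSpan_smul_le (A : OpField n) (f : Vec n → ℝ) (Z : VF n) (x : Vec n) :
    pSpan A (fun y => f y • Z y) x ≤ pSpan A Z x := by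
  rw [pSpan, Submodule.span_le]
  rintro v ⟨p, rfl⟩
  simp only [map_smul]
  exact Submodule.smul_mem _ _ (Submodule.subset_span ⟨p, rfl⟩)

/-- The field `(A - f·Id) Z`. -/
noncomputable def shiftApp (A : OpField n) (f : Vec n → ℝ) (Z : VF n) : VF n :=
  fun x => A x (Z x) - f x • Z x

lemma pSpan_shiftApp_le (A : OpField n) (f : Vec n → ℝ) (Z : VF n) (x : Vec n) :
    pSpan A (shiftApp A f Z) x ≤ pSpan A Z x := by
  rw [pSpan, Submodule.span_le]
  rintro v ⟨p, rfl⟩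
  simp only [shiftApp, map_sub, map_smul]
  refine Submodule.sub_mem _ ?_ (Submodule.smul_mem _ _ (Submodule.subset_span ⟨p, rfl⟩))
  refine Submodule.subset_span ⟨p + 1, ?_⟩
  show (A x ^ (p+1)) (Z x) = (A x ^ p) (A x (Z x))
  rw [pow_succ, ContinuousLinearMap.mul_apply]

/-- The error module: span of the `A`-orbits of `X x` and `Y x`. -/
noncomputable def Msp (A : OpField n) (X Y : VF n) (x : Vec n) : Submodule ℝ (Vec n) :=
  pSpan A X x ⊔ pSpan A Y x

lemma Msp_apply_mem {A : OpField n} {X Y : VF n} {x : Vec n} {v : Vec n}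
    (hv : v ∈ Msp A X Y x) : A x v ∈ Msp A X Y x := by
  rw [Msp, Submodule.mem_sup] at hv ⊢
  obtain ⟨a, ha, b, hb, rfl⟩ := hv
  exact ⟨A x a, apply_mem_pSpan ha, A x b, apply_mem_pSpan hb, (map_add _ _ _).symm⟩

lemma Msp_mono {A : OpField n} {X X' Y Y' : VF n} {x : Vec n}
    (h1 : pSpan A X' x ≤ pSpan A X x) (h2 : pSpan A Y' x ≤ pSpan A Y x) :
    Msp A X' Y' x ≤ Msp A X Y x :=
  sup_le_sup h1 h2

/-! ### Smoothness helpers -/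

variable {U : Set (Vec n)}

lemma smooth_opApp {A : OpField n} {Z : VF n} (hA : ContDiffOn ℝ (⊤:ℕ∞) A U)
    (hZ : ContDiffOn ℝ (⊤:ℕ∞) Z U) : ContDiffOn ℝ (⊤:ℕ∞) (opApp A Z) U :=
  hA.clm_apply hZ

lemma smooth_shiftApp {A : OpField n} {f : Vec n → ℝ} {Z : VF n}
    (hA : ContDiffOn ℝ (⊤:ℕ∞) A U) (hf : ContDiffOn ℝ (⊤:ℕ∞) f U)
    (hZ : ContDiffOn ℝ (⊤:ℕ∞) Z U) : ContDiffOn ℝ (⊤:ℕ∞) (shiftApp A f Z) U :=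
  (hA.clm_apply hZ).sub (hf.smul hZ)

lemma smooth_smulVF {f : Vec n → ℝ} {Z : VF n}
    (hf : ContDiffOn ℝ (⊤:ℕ∞) f U) (hZ : ContDiffOn ℝ (⊤:ℕ∞) Z U) :
    ContDiffOn ℝ (⊤:ℕ∞) (fun y => f y • Z y) U :=
  hf.smul hZ

lemma diffAt {Z : VF n} (hU : IsOpen U) (hZ : ContDiffOn ℝ (⊤:ℕ∞) Z U) {x : Vec n}
    (hx : x ∈ U) : DifferentiableAt ℝ Z x :=
  (hZ.contDiffAt (hU.mem_nhds hx)).differentiableAt (by simp)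

lemma diffAtR {f : Vec n → ℝ} (hU : IsOpen U) (hf : ContDiffOn ℝ (⊤:ℕ∞) f U) {x : Vec n}
    (hx : x ∈ U) : DifferentiableAt ℝ f x :=
  (hf.contDiffAt (hU.mem_nhds hx)).differentiableAt (by simp)

/-! ### Congruence and zero lemmas for the torsion -/

lemma torsion_congr {A : OpField n} (hU : IsOpen U) :
    ∀ (j : ℕ) {X X' Y Y' : VF n}, Set.EqOn X X' U → Set.EqOn Y Y' U →
      ∀ x ∈ U, genTorsion A j X Y x = genTorsion A j X' Y' x := by
  intro j
  induction j with
  | zero =>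
      intro X X' Y Y' hX hY x hx
      have hX' : X =ᶠ[nhds x] X' := Filter.eventuallyEq_of_mem (hU.mem_nhds hx) hX
      have hY' : Y =ᶠ[nhds x] Y' := Filter.eventuallyEq_of_mem (hU.mem_nhds hx) hY
      simp only [genTorsion, lieBracket, hX'.fderiv_eq, hY'.fderiv_eq, hX hx, hY hx]
  | succ j ih =>
      intro X X' Y Y' hX hY x hx
      have hAX : Set.EqOn (opApp A X) (opApp A X') U := fun y hy => by
        simp [opApp, hX hy]
      have hAY : Set.EqOn (opApp A Y) (opApp A Y') U := fun y hy => by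
        simp [opApp, hY hy]
      simp only [genTorsion]
      rw [ih hX hY x hx, ih hAX hAY x hx, ih hX hAY x hx, ih hAX hY x hx]

lemma torsion_zero_left {A : OpField n} :
    ∀ (j : ℕ) (Y : VF n) (x : Vec n), genTorsion A j (fun _ => (0:Vec n)) Y x = 0 := by
  intro j
  induction j with
  | zero =>
      intro Y x
      simp [genTorsion, lieBracket, fderiv_const]
  | succ j ih =>
      intro Y x
      have h0 : opApp A (fun _ => (0:Vec n)) = fun _ => (0:Vec n) := by
        funext y; simp [opApp]
      simp only [genTorsion, h0, ih]
      simp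

/-! ### Additivity -/

lemma torsion_add_left {A : OpField n} (hU : IsOpen U) (hA : ContDiffOn ℝ (⊤:ℕ∞) A U) :
    ∀ (j : ℕ) (X X' Y : VF n), ContDiffOn ℝ (⊤:ℕ∞) X U → ContDiffOn ℝ (⊤:ℕ∞) X' U →
      ContDiffOn ℝ (⊤:ℕ∞) Y U → ∀ x ∈ U,
      genTorsion A j (fun y => X y + X' y) Y x
        = genTorsion A j X Y x + genTorsion A j X' Y x := by
  intro j
  induction j with
  | zero =>
      intro X X' Y hX hX' hY x hx
      simp only [genTorsion, lieBracket]
      rw [fderiv_fun_add (diffAt hU hX hx) (diffAt hU hX' hx)]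
      simp only [ContinuousLinearMap.add_apply, map_add]
      abel
  | succ j ih =>
      intro X X' Y hX hX' hY x hx
      have hadd : opApp A (fun y => X y + X' y) = fun y => opApp A X y + opApp A X' y := by
        funext y; simp [opApp]
      simp only [genTorsion, hadd]
      rw [ih _ _ _ hX hX' hY x hx,
          ih _ _ _ (smooth_opApp hA hX) (smooth_opApp hA hX') (smooth_opApp hA hY) x hx,
          ih _ _ _ hX hX' (smooth_opApp hA hY) x hx,
          ih _ _ _ (smooth_opApp hA hX) (smooth_opApp hA hX') hY x hx]
      simp only [map_add]
      abel

lemma torsion_add_right {A : OpField n} (hU : IsOpen U) (hA : ContDiffOn ℝ (⊤:ℕ∞) A U) :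
    ∀ (j : ℕ) (X Y Y' : VF n), ContDiffOn ℝ (⊤:ℕ∞) X U → ContDiffOn ℝ (⊤:ℕ∞) Y U →
      ContDiffOn ℝ (⊤:ℕ∞) Y' U → ∀ x ∈ U,
      genTorsion A j X (fun y => Y y + Y' y) x
        = genTorsion A j X Y x + genTorsion A j X Y' x := by
  intro j
  induction j with
  | zero =>
      intro X Y Y' hX hY hY' x hx
      simp only [genTorsion, lieBracket]
      rw [fderiv_fun_add (diffAt hU hY hx) (diffAt hU hY' hx)]
      simp only [ContinuousLinearMap.add_apply, map_add]
      abel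
  | succ j ih =>
      intro X Y Y' hX hY hY' x hx
      have hadd : opApp A (fun y => Y y + Y' y) = fun y => opApp A Y y + opApp A Y' y := by
        funext y; simp [opApp]
      simp only [genTorsion, hadd]
      rw [ih _ _ _ hX hY hY' x hx,
          ih _ _ _ (smooth_opApp hA hX) (smooth_opApp hA hY) (smooth_opApp hA hY') x hx,
          ih _ _ _ hX (smooth_opApp hA hY) (smooth_opApp hA hY') x hx,
          ih _ _ _ (smooth_opApp hA hX) hY hY' x hx]
      simp only [map_add]
      abel

/-! ### Scalar multiplication modulo `Msp` -/

lemma torsion_smul_left {A : OpField n} (hU : IsOpen U) (hA : ContDiffOn ℝ (⊤:ℕ∞) A U) :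
    ∀ (j : ℕ) (f : Vec n → ℝ) (X Y : VF n), ContDiffOn ℝ (⊤:ℕ∞) f U →
      ContDiffOn ℝ (⊤:ℕ∞) X U → ContDiffOn ℝ (⊤:ℕ∞) Y U → ∀ x ∈ U,
      genTorsion A j (fun y => f y • X y) Y x - f x • genTorsion A j X Y x
        ∈ Msp A X Y x := by
  intro j
  induction j with
  | zero =>
      intro f X Y hf hX hY x hx
      simp only [genTorsion, lieBracket]
      rw [fderiv_fun_smul (diffAtR hU hf hx) (diffAt hU hX hx)]
      simp only [ContinuousLinearMap.add_apply, ContinuousLinearMap.smul_apply,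
        ContinuousLinearMap.smulRight_apply, map_smul]
      have : f x • fderiv ℝ Y x (X x) - (f x • fderiv ℝ X x (Y x)
          + fderiv ℝ f x (Y x) • X x) - f x • (fderiv ℝ Y x (X x) - fderiv ℝ X x (Y x))
          = -(fderiv ℝ f x (Y x) • X x) := by module
      rw [this]
      exact Submodule.neg_mem _ (le_sup_left (α := Submodule ℝ (Vec n))
        (Submodule.smul_mem _ _ (self_mem_pSpan A X x)))
  | succ j ih =>
      intro f X Y hf hX hY x hx
      have hsm : opApp A (fun y => f y • X y) = fun y => f y • opApp A X y := by
        funext y; simp [opApp]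
      simp only [genTorsion, hsm]
      have e1 := ih f X Y hf hX hY x hx
      have e2 := ih f (opApp A X) (opApp A Y) hf (smooth_opApp hA hX) (smooth_opApp hA hY) x hx
      have e3 := ih f X (opApp A Y) hf hX (smooth_opApp hA hY) x hx
      have e4 := ih f (opApp A X) Y hf (smooth_opApp hA hX) hY x hx
      set t1 := genTorsion A j (fun y => f y • X y) Y x
      set t2 := genTorsion A j (fun y => f y • opApp A X y) (opApp A Y) x
      set t3 := genTorsion A j (fun y => f y • X y) (opApp A Y) x
      set t4 := genTorsion A j (fun y => f y • opApp A X y) Y x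
      have key : A x (A x t1) + t2 - A x (t3 + t4)
          - f x • (A x (A x (genTorsion A j X Y x))
              + genTorsion A j (opApp A X) (opApp A Y) x
              - A x (genTorsion A j X (opApp A Y) x + genTorsion A j (opApp A X) Y x))
          = A x (A x (t1 - f x • genTorsion A j X Y x))
            + (t2 - f x • genTorsion A j (opApp A X) (opApp A Y) x)
            - A x ((t3 - f x • genTorsion A j X (opApp A Y) x)
                 + (t4 - f x • genTorsion A j (opApp A X) Y x)) := by
        simp only [map_add, map_sub, map_smul]
        module
      rw [key]
      have m2 : t2 - f x • genTorsion A j (opApp A X) (opApp A Y) x ∈ Msp A X Y x :=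
        Msp_mono (pSpan_opApp_le A X x) (pSpan_opApp_le A Y x) e2
      have m3 : t3 - f x • genTorsion A j X (opApp A Y) x ∈ Msp A X Y x :=
        Msp_mono le_rfl (pSpan_opApp_le A Y x) e3
      have m4 : t4 - f x • genTorsion A j (opApp A X) Y x ∈ Msp A X Y x :=
        Msp_mono (pSpan_opApp_le A X x) le_rfl e4
      exact Submodule.sub_mem _
        (Submodule.add_mem _ (Msp_apply_mem (Msp_apply_mem e1)) m2)
        (Msp_apply_mem (Submodule.add_mem _ m3 m4))

lemma torsion_smul_right {A : OpField n} (hU : IsOpen U) (hA : ContDiffOn ℝ (⊤:ℕ∞) A U) :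
    ∀ (j : ℕ) (g : Vec n → ℝ) (X Y : VF n), ContDiffOn ℝ (⊤:ℕ∞) g U →
      ContDiffOn ℝ (⊤:ℕ∞) X U → ContDiffOn ℝ (⊤:ℕ∞) Y U → ∀ x ∈ U,
      genTorsion A j X (fun y => g y • Y y) x - g x • genTorsion A j X Y x
        ∈ Msp A X Y x := by
  intro j
  induction j with
  | zero =>
      intro g X Y hg hX hY x hx
      simp only [genTorsion, lieBracket]
      rw [fderiv_fun_smul (diffAtR hU hg hx) (diffAt hU hY hx)]
      simp only [ContinuousLinearMap.add_apply, ContinuousLinearMap.smul_apply,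
        ContinuousLinearMap.smulRight_apply, map_smul]
      have heq : g x • fderiv ℝ Y x (X x) + fderiv ℝ g x (X x) • Y x
          - g x • fderiv ℝ X x (Y x)
          - g x • (fderiv ℝ Y x (X x) - fderiv ℝ X x (Y x))
          = fderiv ℝ g x (X x) • Y x := by module
      rw [heq]
      exact le_sup_right (α := Submodule ℝ (Vec n))
        (Submodule.smul_mem _ _ (self_mem_pSpan A Y x))
  | succ j ih =>
      intro g X Y hg hX hY x hx
      have hsm : opApp A (fun y => g y • Y y) = fun y => g y • opApp A Y y := by
        funext y; simp [opApp]
      simp only [genTorsion, hsm]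
      have e1 := ih g X Y hg hX hY x hx
      have e2 := ih g (opApp A X) (opApp A Y) hg (smooth_opApp hA hX) (smooth_opApp hA hY) x hx
      have e3 := ih g X (opApp A Y) hg hX (smooth_opApp hA hY) x hx
      have e4 := ih g (opApp A X) Y hg (smooth_opApp hA hX) hY x hx
      set t1 := genTorsion A j X (fun y => g y • Y y) x
      set t2 := genTorsion A j (opApp A X) (fun y => g y • opApp A Y y) x
      set t3 := genTorsion A j X (fun y => g y • opApp A Y y) x
      set t4 := genTorsion A j (opApp A X) (fun y => g y • Y y) x
      have key : A x (A x t1) + t2 - A x (t3 + t4)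
          - g x • (A x (A x (genTorsion A j X Y x))
              + genTorsion A j (opApp A X) (opApp A Y) x
              - A x (genTorsion A j X (opApp A Y) x + genTorsion A j (opApp A X) Y x))
          = A x (A x (t1 - g x • genTorsion A j X Y x))
            + (t2 - g x • genTorsion A j (opApp A X) (opApp A Y) x)
            - A x ((t3 - g x • genTorsion A j X (opApp A Y) x)
                 + (t4 - g x • genTorsion A j (opApp A X) Y x)) := by
        simp only [map_add, map_sub, map_smul]
        module
      rw [key]
      have m2 : t2 - g x • genTorsion A j (opApp A X) (opApp A Y) x ∈ Msp A X Y x :=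
        Msp_mono (pSpan_opApp_le A X x) (pSpan_opApp_le A Y x) e2
      have m3 : t3 - g x • genTorsion A j X (opApp A Y) x ∈ Msp A X Y x :=
        Msp_mono le_rfl (pSpan_opApp_le A Y x) e3
      have m4 : t4 - g x • genTorsion A j (opApp A X) Y x ∈ Msp A X Y x :=
        Msp_mono (pSpan_opApp_le A X x) le_rfl e4
      exact Submodule.sub_mem _
        (Submodule.add_mem _ (Msp_apply_mem (Msp_apply_mem e1)) m2)
        (Msp_apply_mem (Submodule.add_mem _ m3 m4))

/-! ### The one-step deconvolution identity -/

lemma torsion_step {A : OpField n} (hU : IsOpen U) (hA : ContDiffOn ℝ (⊤:ℕ∞) A U)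
    (j : ℕ) (f g : Vec n → ℝ) (X Y : VF n)
    (hf : ContDiffOn ℝ (⊤:ℕ∞) f U) (hg : ContDiffOn ℝ (⊤:ℕ∞) g U)
    (hX : ContDiffOn ℝ (⊤:ℕ∞) X U) (hY : ContDiffOn ℝ (⊤:ℕ∞) Y U)
    {x : Vec n} (hx : x ∈ U) :
    genTorsion A (j+1) X Y x
      - ( (A x - f x • 1) ((A x - g x • 1) (genTorsion A j X Y x))
          + genTorsion A j (shiftApp A f X) (shiftApp A g Y) x
          - (A x - g x • 1) (genTorsion A j (shiftApp A f X) Y x)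
          - (A x - f x • 1) (genTorsion A j X (shiftApp A g Y) x) )
      ∈ Msp A X Y x := by
  have hEX := smooth_shiftApp hA hf hX
  have hFY := smooth_shiftApp hA hg hY
  have hAX := smooth_opApp hA hX
  have hAY := smooth_opApp hA hY
  have hdX : opApp A X = fun y => shiftApp A f X y + f y • X y := by
    funext y; simp [opApp, shiftApp]
  have hdY : opApp A Y = fun y => shiftApp A g Y y + g y • Y y := by
    funext y; simp [opApp, shiftApp]
  have hT2a : genTorsion A j (opApp A X) (opApp A Y) x
      = genTorsion A j (shiftApp A f X) (opApp A Y) x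
        + genTorsion A j (fun y => f y • X y) (opApp A Y) x := by
    conv_lhs => rw [hdX]
    exact torsion_add_left hU hA j _ _ _ hEX (smooth_smulVF hf hX) hAY x hx
  have hT2b : genTorsion A j (shiftApp A f X) (opApp A Y) x
      = genTorsion A j (shiftApp A f X) (shiftApp A g Y) x
        + genTorsion A j (shiftApp A f X) (fun y => g y • Y y) x := by
    conv_lhs => rw [hdY]
    exact torsion_add_right hU hA j _ _ _ hEX hFY (smooth_smulVF hg hY) x hx
  have m1 : genTorsion A j (shiftApp A f X) (fun y => g y • Y y) x
      - g x • genTorsion A j (shiftApp A f X) Y x ∈ Msp A X Y x :=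
    Msp_mono (pSpan_shiftApp_le A f X x) le_rfl
      (torsion_smul_right hU hA j g _ Y hg hEX hY x hx)
  have m2 : genTorsion A j (fun y => f y • X y) (opApp A Y) x
      - f x • genTorsion A j X (opApp A Y) x ∈ Msp A X Y x :=
    Msp_mono le_rfl (pSpan_opApp_le A Y x)
      (torsion_smul_left hU hA j f X _ hf hX hAY x hx)
  have hT3a : genTorsion A j X (opApp A Y) x
      = genTorsion A j X (shiftApp A g Y) x
        + genTorsion A j X (fun y => g y • Y y) x := by
    conv_lhs => rw [hdY]
    exact torsion_add_right hU hA j _ _ _ hX hFY (smooth_smulVF hg hY) x hx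
  have m3 : genTorsion A j X (fun y => g y • Y y) x
      - g x • genTorsion A j X Y x ∈ Msp A X Y x :=
    torsion_smul_right hU hA j g X Y hg hX hY x hx
  have hT4a : genTorsion A j (opApp A X) Y x
      = genTorsion A j (shiftApp A f X) Y x
        + genTorsion A j (fun y => f y • X y) Y x := by
    conv_lhs => rw [hdX]
    exact torsion_add_left hU hA j _ _ _ hEX (smooth_smulVF hf hX) hY x hx
  have m4 : genTorsion A j (fun y => f y • X y) Y x
      - f x • genTorsion A j X Y x ∈ Msp A X Y x :=
    torsion_smul_left hU hA j f X Y hf hX hY x hx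
  set t := genTorsion A j X Y x with ht
  set P := genTorsion A j (shiftApp A f X) (shiftApp A g Y) x with hP
  set Q := genTorsion A j (shiftApp A f X) Y x with hQ
  set R := genTorsion A j X (shiftApp A g Y) x with hR
  have main : genTorsion A (j+1) X Y x
      - ( (A x - f x • 1) ((A x - g x • 1) t) + P
          - (A x - g x • 1) Q - (A x - f x • 1) R )
      = (genTorsion A j (shiftApp A f X) (fun y => g y • Y y) x - g x • Q)
        + (genTorsion A j (fun y => f y • X y) (opApp A Y) x
            - f x • genTorsion A j X (opApp A Y) x)
        + f x • (genTorsion A j X (fun y => g y • Y y) x - g x • t)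
        - A x (genTorsion A j X (fun y => g y • Y y) x - g x • t)
        - A x (genTorsion A j (fun y => f y • X y) Y x - f x • t) := by
    have hrec : genTorsion A (j+1) X Y x
        = A x (A x t) + genTorsion A j (opApp A X) (opApp A Y) x
          - A x (genTorsion A j X (opApp A Y) x + genTorsion A j (opApp A X) Y x) := rfl
    rw [hrec, hT2a, hT2b, hT4a, hT3a]
    simp only [ContinuousLinearMap.sub_apply, ContinuousLinearMap.smul_apply,
      ContinuousLinearMap.one_apply, map_add, map_sub, map_smul]
    module
  rw [main]
  exact Submodule.sub_mem _ (Submodule.sub_mem _ (Submodule.add_mem _ (Submodule.add_mem _ m1 m2)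
    (Submodule.smul_mem _ _ m3)) (Msp_apply_mem m3)) (Msp_apply_mem m4)

/-! ### Killing the error module by polynomials -/

lemma Msp_kill {A : OpField n} {V W : VF n} {x : Vec n} {pa pb G : ℝ[X]}
    (hVa : ev A x pa (V x) = 0) (hWb : ev A x pb (W x) = 0)
    (hda : pa ∣ G) (hdb : pb ∣ G) :
    ∀ v ∈ Msp A V W x, ev A x G v = 0 := by
  have kill : ∀ (Z : VF n) (p : ℝ[X]), ev A x p (Z x) = 0 → p ∣ G →
      ∀ w ∈ pSpan A Z x, ev A x G w = 0 := by
    intro Z p hp hdvd w hw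
    induction hw using Submodule.span_induction with
    | mem w hw =>
        obtain ⟨k, rfl⟩ := hw
        show ev A x G ((A x ^ k) (Z x)) = 0
        have h1 : (A x ^ k) (Z x) = ev A x (X ^ k) (Z x) := by simp [ev]
        rw [h1, ← ev_mul_apply]
        exact ev_dvd_zero A x (dvd_mul_of_dvd_left hdvd _) hp
    | zero => simp
    | add u v _ _ hu hv => rw [map_add, hu, hv, add_zero]
    | smul c v _ hv => rw [map_smul, hv, smul_zero]
  intro v hv
  rw [Msp, Submodule.mem_sup] at hv
  obtain ⟨u1, h1, u2, h2, rfl⟩ := hv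
  rw [map_add, kill V pa hVa hda u1 h1, kill W pb hWb hdb u2 h2, add_zero]

/-! ### Polynomial product bookkeeping -/

lemma prod_update_mul {s : ℕ} (S : Finset (Fin s)) {i₁ : Fin s} (hi₁ : i₁ ∈ S)
    (μ : Fin s → ℝ) (a : Fin s → ℕ) (h1 : 1 ≤ a i₁) :
    (∏ i ∈ S, (X - C (μ i)) ^ (Function.update a i₁ (a i₁ - 1) i)) * (X - C (μ i₁))
      = ∏ i ∈ S, (X - C (μ i)) ^ a i := by
  have h2 : ∀ i ∈ S.erase i₁,
      (X - C (μ i)) ^ (Function.update a i₁ (a i₁ - 1) i) = (X - C (μ i)) ^ a i := by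
    intro i hi
    rw [Function.update_of_ne (Finset.ne_of_mem_erase hi)]
  rw [← Finset.mul_prod_erase S (fun i => (X - C (μ i)) ^ (Function.update a i₁ (a i₁ - 1) i)) hi₁,
      ← Finset.mul_prod_erase S (fun i => (X - C (μ i)) ^ a i) hi₁,
      Finset.prod_congr rfl h2, Function.update_self]
  have h3 : a i₁ - 1 + 1 = a i₁ := Nat.succ_pred_eq_of_pos h1
  conv_rhs => rw [← h3, pow_succ]
  ring

lemma prod_pow_dvd {s : ℕ} (S : Finset (Fin s)) (μ : Fin s → ℝ) (a : Fin s → ℕ) (N : ℕ)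
    (h : ∀ i ∈ S, a i ≤ N) :
    (∏ i ∈ S, (X - C (μ i)) ^ a i) ∣ ∏ i ∈ S, (X - C (μ i)) ^ N :=
  Finset.prod_dvd_prod_of_dvd _ _ (fun i hi => pow_dvd_pow _ (h i hi))

lemma prod_pow_dvd_succ_two {s : ℕ} (S : Finset (Fin s)) (μ : Fin s → ℝ) (N : ℕ)
    {i₁ i₂ : Fin s} (hi₁ : i₁ ∈ S) (hi₂ : i₂ ∈ S) :
    (∏ i ∈ S, (X - C (μ i)) ^ N) * (X - C (μ i₁)) * (X - C (μ i₂))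
      ∣ ∏ i ∈ S, (X - C (μ i)) ^ (N + 2) := by
  have h1 : (X - C (μ i₁)) ∣ ∏ i ∈ S, (X - C (μ i)) :=
    Finset.dvd_prod_of_mem _ hi₁
  have h2 : (X - C (μ i₂)) ∣ ∏ i ∈ S, (X - C (μ i)) :=
    Finset.dvd_prod_of_mem _ hi₂
  have h3 : ∏ i ∈ S, (X - C (μ i)) ^ (N + 2)
      = (∏ i ∈ S, (X - C (μ i)) ^ N) * ((∏ i ∈ S, (X - C (μ i))) * (∏ i ∈ S, (X - C (μ i)))) := by
    rw [← Finset.prod_mul_distrib, ← Finset.prod_mul_distrib]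
    refine Finset.prod_congr rfl fun i _ => ?_
    ring
  rw [h3, mul_assoc]
  exact mul_dvd_mul_left _ (mul_dvd_mul h1 h2)

/-! ### Vanishing torsion for fields that vanish on U -/

lemma torsion_zero_right {A : OpField n} :
    ∀ (j : ℕ) (V : VF n) (x : Vec n), genTorsion A j V (fun _ => (0:Vec n)) x = 0 := by
  intro j
  induction j with
  | zero =>
      intro V x
      simp [genTorsion, lieBracket, fderiv_const]
  | succ j ih =>
      intro V x
      have h0 : opApp A (fun _ => (0:Vec n)) = fun _ => (0:Vec n) := by
        funext y; simp [opApp]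
      simp only [genTorsion, h0, ih]
      simp

lemma torsion_of_left_zero {A : OpField n} (hU : IsOpen U) (j : ℕ) {V : VF n} (W : VF n)
    (hV0 : ∀ x ∈ U, V x = 0) : ∀ x ∈ U, genTorsion A j V W x = 0 := fun x hx =>
  (torsion_congr hU j (fun y hy => hV0 y hy) (fun _ _ => rfl) x hx).trans
    (torsion_zero_left j W x)

lemma torsion_of_right_zero {A : OpField n} (hU : IsOpen U) (j : ℕ) (V : VF n) {W : VF n}
    (hW0 : ∀ x ∈ U, W x = 0) : ∀ x ∈ U, genTorsion A j V W x = 0 := fun x hx =>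
  (torsion_congr hU j (fun _ _ => rfl) (fun y hy => hW0 y hy) x hx).trans
    (torsion_zero_right j V x)

/-! ### The key induction -/

lemma key {A : OpField n} (hU : IsOpen U) (hA : ContDiffOn ℝ (⊤:ℕ∞) A U)
    {s : ℕ} (lam : Fin s → Vec n → ℝ) (hlam : ∀ i, ContDiffOn ℝ (⊤:ℕ∞) (lam i) U)
    (S : Finset (Fin s)) (m : ℕ)
    (hvan : ∀ V W : VF n, ContDiffOn ℝ (⊤:ℕ∞) V U → ContDiffOn ℝ (⊤:ℕ∞) W U →
      ∀ x ∈ U, genTorsion A m V W x = 0) :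
    ∀ (d j : ℕ), j + d = m → ∀ (c : ℕ) (a b : Fin s → ℕ) (V W : VF n),
      (∑ i ∈ S, a i) + (∑ i ∈ S, b i) ≤ c →
      ContDiffOn ℝ (⊤:ℕ∞) V U → ContDiffOn ℝ (⊤:ℕ∞) W U →
      (∀ x ∈ U, ev A x (∏ i ∈ S, (X - C (lam i x)) ^ a i) (V x) = 0) →
      (∀ x ∈ U, ev A x (∏ i ∈ S, (X - C (lam i x)) ^ b i) (W x) = 0) →
      ∃ N : ℕ, ∀ x ∈ U,
        ev A x (∏ i ∈ S, (X - C (lam i x)) ^ N) (genTorsion A j V W x) = 0 := by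
  intro d
  induction d with
  | zero =>
      intro j hj c a b V W hc hV hW ha hb
      refine ⟨0, fun x hx => ?_⟩
      rw [Nat.add_zero] at hj
      subst hj
      rw [hvan V W hV hW x hx, map_zero]
  | succ d ihd =>
      intro j hj c
      induction c with
      | zero =>
          intro a b V W hc hV hW ha hb
          have haz : ∀ i ∈ S, a i = 0 := by
            intro i hi
            have := Finset.single_le_sum (f := a) (fun i _ => Nat.zero_le _) hi
            omega
          have hV0 : ∀ x ∈ U, V x = 0 := by
            intro x hx
            have := ha x hx
            rw [Finset.prod_congr rfl (fun i hi => by rw [haz i hi, pow_zero]),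
                Finset.prod_const_one, ev_one_apply] at this
            exact this
          exact ⟨0, fun x hx => by
            rw [torsion_of_left_zero hU j W hV0 x hx, map_zero]⟩
      | succ c ihc =>
          intro a b V W hc hV hW ha hb
          by_cases haz : ∀ i ∈ S, a i = 0
          · have hV0 : ∀ x ∈ U, V x = 0 := by
              intro x hx
              have := ha x hx
              rw [Finset.prod_congr rfl (fun i hi => by rw [haz i hi, pow_zero]),
                  Finset.prod_const_one, ev_one_apply] at this
              exact this
            exact ⟨0, fun x hx => by
              rw [torsion_of_left_zero hU j W hV0 x hx, map_zero]⟩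
          by_cases hbz : ∀ i ∈ S, b i = 0
          · have hW0 : ∀ x ∈ U, W x = 0 := by
              intro x hx
              have := hb x hx
              rw [Finset.prod_congr rfl (fun i hi => by rw [hbz i hi, pow_zero]),
                  Finset.prod_const_one, ev_one_apply] at this
              exact this
            exact ⟨0, fun x hx => by
              rw [torsion_of_right_zero hU j V hW0 x hx, map_zero]⟩
          push_neg at haz hbz
          obtain ⟨i₁, hi₁, ha1⟩ := haz
          obtain ⟨i₂, hi₂, hb1⟩ := hbz
          have ha1' : 1 ≤ a i₁ := Nat.one_le_iff_ne_zero.mpr ha1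
          have hb1' : 1 ≤ b i₂ := Nat.one_le_iff_ne_zero.mpr hb1
          set a' := Function.update a i₁ (a i₁ - 1) with ha'
          set b' := Function.update b i₂ (b i₂ - 1) with hb'
          set EV := shiftApp A (lam i₁) V with hEV
          set FW := shiftApp A (lam i₂) W with hFW
          have hEVs : ContDiffOn ℝ (⊤:ℕ∞) EV U := smooth_shiftApp hA (hlam i₁) hV
          have hFWs : ContDiffOn ℝ (⊤:ℕ∞) FW U := smooth_shiftApp hA (hlam i₂) hW
          -- annihilation for shifted fields
          have haEV : ∀ x ∈ U,
              ev A x (∏ i ∈ S, (X - C (lam i x)) ^ a' i) (EV x) = 0 := by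
            intro x hx
            have hsh : EV x = ev A x (X - C (lam i₁ x)) (V x) := by
              rw [ev_X_sub_C]
              simp [hEV, shiftApp]
            rw [hsh, ← ev_mul_apply, prod_update_mul S hi₁ (fun i => lam i x) a ha1']
            exact ha x hx
          have hbFW : ∀ x ∈ U,
              ev A x (∏ i ∈ S, (X - C (lam i x)) ^ b' i) (FW x) = 0 := by
            intro x hx
            have hsh : FW x = ev A x (X - C (lam i₂ x)) (W x) := by
              rw [ev_X_sub_C]
              simp [hFW, shiftApp]
            rw [hsh, ← ev_mul_apply, prod_update_mul S hi₂ (fun i => lam i x) b hb1']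
            exact hb x hx
          -- sums of updates
          have hsa : ∑ i ∈ S, a' i + 1 = ∑ i ∈ S, a i := by
            rw [ha', Finset.sum_update_of_mem hi₁, Finset.sdiff_singleton_eq_erase,
              ← Finset.add_sum_erase S a hi₁]
            omega
          have hsb : ∑ i ∈ S, b' i + 1 = ∑ i ∈ S, b i := by
            rw [hb', Finset.sum_update_of_mem hi₂, Finset.sdiff_singleton_eq_erase,
              ← Finset.add_sum_erase S b hi₂]
            omega
          -- four inductive bounds
          obtain ⟨N₀, hN₀⟩ := ihd (j+1) (by omega) ((∑ i ∈ S, a i) + (∑ i ∈ S, b i))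
            a b V W le_rfl hV hW ha hb
          obtain ⟨N₁, hN₁⟩ := ihc a' b' EV FW (by omega) hEVs hFWs haEV hbFW
          obtain ⟨N₂, hN₂⟩ := ihc a' b EV W (by omega) hEVs hW haEV hb
          obtain ⟨N₃, hN₃⟩ := ihc a b' V FW (by omega) hV hFWs ha hbFW
          -- kill threshold for Msp
          have hbnd_a : ∀ i ∈ S, a i ≤ ∑ i ∈ S, a i :=
            fun i hi => Finset.single_le_sum (fun i _ => Nat.zero_le _) hi
          have hbnd_b : ∀ i ∈ S, b i ≤ ∑ i ∈ S, b i :=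
            fun i hi => Finset.single_le_sum (fun i _ => Nat.zero_le _) hi
          set N' := max (max (max N₀ N₁) (max N₂ N₃))
            (max (∑ i ∈ S, a i) (∑ i ∈ S, b i)) with hN'
          refine ⟨N' + 2, fun x hx => ?_⟩
          -- abbreviations at the point x
          set G : ℕ → ℝ[X] := fun N => ∏ i ∈ S, (X - C (lam i x)) ^ N with hG
          have hdvd : ∀ {N₄ : ℕ}, N₄ ≤ N' → G N₄ ∣ G N' :=
            fun h => prod_pow_dvd S _ _ _ (fun i _ => h)
          have hstep := torsion_step hU hA j (lam i₁) (lam i₂) V W (hlam i₁) (hlam i₂) hV hW hx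
          set t := genTorsion A j V W x with hts
          set E := A x - lam i₁ x • (1 : Vec n →L[ℝ] Vec n) with hE
          set F := A x - lam i₂ x • (1 : Vec n →L[ℝ] Vec n) with hF
          set P := genTorsion A j EV FW x with hPs
          set Q := genTorsion A j EV W x with hQs
          set R := genTorsion A j V FW x with hRs
          set T1 := genTorsion A (j+1) V W x with hT1
          have hkill : ∀ v ∈ Msp A V W x, ev A x (G N') v = 0 :=
            Msp_kill (ha x hx) (hb x hx)
              (prod_pow_dvd S _ a N' (fun i hi => by have := hbnd_a i hi; omega))
              (prod_pow_dvd S _ b N' (fun i hi => by have := hbnd_b i hi; omega))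
          have h0 : ev A x (G N') T1 = 0 :=
            ev_dvd_zero A x (hdvd (by omega)) (hN₀ x hx)
          have h1 : ev A x (G N') P = 0 :=
            ev_dvd_zero A x (hdvd (by omega)) (hN₁ x hx)
          have h2 : ev A x (G N') (F Q) = 0 := by
            have hFQ : F Q = ev A x (X - C (lam i₂ x)) Q := by rw [ev_X_sub_C]
            rw [hFQ, ← ev_mul_apply]
            exact ev_dvd_zero A x (dvd_mul_of_dvd_left (hdvd (by omega)) _) (hN₂ x hx)
          have h3 : ev A x (G N') (E R) = 0 := by
            have hER : E R = ev A x (X - C (lam i₁ x)) R := by rw [ev_X_sub_C]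
            rw [hER, ← ev_mul_apply]
            exact ev_dvd_zero A x (dvd_mul_of_dvd_left (hdvd (by omega)) _) (hN₃ x hx)
          have h4 : ev A x (G N') (T1 - (E (F t) + P - F Q - E R)) = 0 :=
            hkill _ hstep
          have h5 : ev A x (G N') (E (F t)) = 0 := by
            have l4 := h4
            rw [map_sub, h0, zero_sub, neg_eq_zero] at l4
            rw [map_sub, map_sub, map_add, h1, h2, h3] at l4
            simpa using l4
          have h6 : ev A x (G N' * (X - C (lam i₁ x)) * (X - C (lam i₂ x))) t = 0 := by
            rw [ev_mul_apply, ev_mul_apply, ev_X_sub_C, ev_X_sub_C]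
            exact h5
          exact ev_dvd_zero A x (prod_pow_dvd_succ_two S (fun i => lam i x) N' hi₁ hi₂) h6
/-! ### Pointwise linear algebra -/

lemma ev_pow_shift (A : OpField n) (x : Vec n) (c : ℝ) (k : ℕ) :
    ev A x ((X - C c) ^ k) = (A x - c • 1) ^ k := by
  have h1 : ev A x ((X - C c) ^ k) = (ev A x (X - C c)) ^ k := map_pow (aeval (A x)) _ k
  rw [h1, ev_X_sub_C]

lemma eigenDist_ev_mem {A : OpField n} {lm : Vec n → ℝ} {ρ : ℕ} {x : Vec n} (p : ℝ[X])
    {w : Vec n} (hw : w ∈ eigenDist A lm ρ x) : ev A x p w ∈ eigenDist A lm ρ x := by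
  rw [eigenDist, LinearMap.mem_ker, ContinuousLinearMap.coe_coe] at hw ⊢
  rw [← ev_pow_shift, ← ev_mul_apply, mul_comm, ev_mul_apply, ev_pow_shift, hw, map_zero]

lemma annihilate_of_mem_iSup {A : OpField n} {s : ℕ} (lam : Fin s → Vec n → ℝ)
    (ρ : Fin s → ℕ) (S : Finset (Fin s)) (x : Vec n) {v : Vec n}
    (hv : v ∈ ⨆ i ∈ S, eigenDist A (lam i) (ρ i) x) :
    ev A x (∏ i ∈ S, (X - C (lam i x)) ^ ρ i) v = 0 := by
  have hle : (⨆ i ∈ S, eigenDist A (lam i) (ρ i) x)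
      ≤ LinearMap.ker (ev A x (∏ i ∈ S, (X - C (lam i x)) ^ ρ i) : Vec n →ₗ[ℝ] Vec n) := by
    refine iSup₂_le fun i hi => fun w hw => ?_
    rw [LinearMap.mem_ker, ContinuousLinearMap.coe_coe]
    have hfac : (X - C (lam i x)) ^ ρ i ∣ ∏ i ∈ S, (X - C (lam i x)) ^ ρ i :=
      Finset.dvd_prod_of_mem _ hi
    refine ev_dvd_zero A x hfac ?_
    rw [ev_pow_shift]
    exact LinearMap.mem_ker.mp hw
  exact LinearMap.mem_ker.mp (hle hv)

lemma single_step {T : Vec n →L[ℝ] Vec n} {lamv c : ℝ} (hne : c ≠ lamv) {ρ : ℕ} {w : Vec n}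
    (hw : ((T - lamv • 1) ^ ρ) w = 0) (h1 : (T - c • 1) w = 0) : w = 0 := by
  have hTw : T w = c • w := by
    rwa [ContinuousLinearMap.sub_apply, ContinuousLinearMap.smul_apply,
      ContinuousLinearMap.one_apply, sub_eq_zero] at h1
  have hpow : ∀ k : ℕ, ((T - lamv • 1) ^ k) w = (c - lamv) ^ k • w := by
    intro k
    induction k with
    | zero => simp
    | succ k ih =>
        rw [pow_succ', ContinuousLinearMap.mul_apply, ih, map_smul,
          ContinuousLinearMap.sub_apply, ContinuousLinearMap.smul_apply,
          ContinuousLinearMap.one_apply, hTw, ← sub_smul, smul_smul, ← pow_succ]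
  have h2 : (c - lamv) ^ ρ • w = 0 := by rw [← hpow ρ, hw]
  rcases smul_eq_zero.mp h2 with h3 | h3
  · exact absurd h3 (pow_ne_zero ρ (sub_ne_zero.mpr hne))
  · exact h3

lemma eigen_kill_inj {A : OpField n} {lm : Vec n → ℝ} {ρ : ℕ} {x : Vec n} {c : ℝ}
    (hne : c ≠ lm x) : ∀ (k : ℕ) (w : Vec n), w ∈ eigenDist A lm ρ x →
      ((A x - c • 1) ^ k) w = 0 → w = 0 := by
  intro k
  induction k with
  | zero => intro w _ h; simpa using h
  | succ k ih =>
      intro w hw h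
      have hu : (A x - c • 1) w ∈ eigenDist A lm ρ x := by
        have h1 : (A x - c • 1) w = ev A x (X - C c) w := by rw [ev_X_sub_C]
        rw [h1]; exact eigenDist_ev_mem _ hw
      have h2 : ((A x - c • 1) ^ k) ((A x - c • 1) w) = 0 := by
        rw [← ContinuousLinearMap.mul_apply, ← pow_succ]
        exact h
      exact single_step (T := A x) (ρ := ρ) hne (LinearMap.mem_ker.mp hw) (ih _ hu h2)

lemma prod_kill_inj {A : OpField n} {s : ℕ} {lam : Fin s → Vec n → ℝ} {ρ : Fin s → ℕ}
    {x : Vec n} {i : Fin s}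
    (hdis : ∀ j : Fin s, j ≠ i → lam j x ≠ lam i x) (N : ℕ) :
    ∀ (S' : Finset (Fin s)), i ∉ S' → ∀ w ∈ eigenDist A (lam i) (ρ i) x,
      ev A x (∏ j ∈ S', (X - C (lam j x)) ^ N) w = 0 → w = 0 := by
  classical
  intro S'
  induction S' using Finset.induction_on with
  | empty => intro _ w _ h; rwa [Finset.prod_empty, ev_one_apply] at h
  | @insert j₀ S'' hj₀S ih =>
      intro hiINS w hw h
      have hij₀ : i ≠ j₀ := fun hEq => hiINS (by rw [hEq]; exact Finset.mem_insert_self _ _)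
      have hiS'' : i ∉ S'' := fun hmem => hiINS (Finset.mem_insert_of_mem hmem)
      rw [Finset.prod_insert hj₀S, ev_mul_apply] at h
      have huD : ev A x (∏ j ∈ S'', (X - C (lam j x)) ^ N) w
          ∈ eigenDist A (lam i) (ρ i) x := eigenDist_ev_mem _ hw
      have hupow : ((A x - lam j₀ x • 1) ^ N)
          (ev A x (∏ j ∈ S'', (X - C (lam j x)) ^ N) w) = 0 := by
        rw [← ev_pow_shift]
        exact h
      have hu0 := eigen_kill_inj (hdis j₀ hij₀.symm) N _ huD hupow
      exact ih hiS'' w hw hu0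

lemma mem_iSup_of_annihilate {A : OpField n} {s : ℕ} {lam : Fin s → Vec n → ℝ}
    {ρ : Fin s → ℕ} {x : Vec n}
    (hdis : ∀ i j : Fin s, i ≠ j → lam i x ≠ lam j x)
    (hint : DirectSum.IsInternal (fun i => eigenDist A (lam i) (ρ i) x))
    (S : Finset (Fin s)) (N : ℕ) {v : Vec n}
    (hv : ev A x (∏ i ∈ S, (X - C (lam i x)) ^ N) v = 0) :
    v ∈ ⨆ i ∈ S, eigenDist A (lam i) (ρ i) x := by
  classical
  have hvtop : v ∈ ⨆ i, eigenDist A (lam i) (ρ i) x := by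
    rw [hint.submodule_iSup_eq_top]; trivial
  rw [Submodule.mem_iSup_iff_exists_finsupp] at hvtop
  obtain ⟨f, hf, hsum⟩ := hvtop
  have hsum' : ∑ i, f i = v := by
    rw [← hsum, Finsupp.sum_fintype _ _ (fun i => rfl)]
  have hwD : ∀ i, ev A x (∏ i ∈ S, (X - C (lam i x)) ^ N) (f i)
      ∈ eigenDist A (lam i) (ρ i) x := fun i => eigenDist_ev_mem _ (hf i)
  have hwsum : ∑ i, ev A x (∏ i ∈ S, (X - C (lam i x)) ^ N) (f i) = 0 := by
    rw [← map_sum, hsum']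
    exact hv
  have hind := hint.submodule_iSupIndep
  have hzero : ∀ i, ev A x (∏ i ∈ S, (X - C (lam i x)) ^ N) (f i) = 0 := by
    intro i
    have hmem2 : ev A x (∏ i ∈ S, (X - C (lam i x)) ^ N) (f i)
        ∈ ⨆ j, ⨆ (_ : j ≠ i), eigenDist A (lam j) (ρ j) x := by
      have heq : ev A x (∏ i ∈ S, (X - C (lam i x)) ^ N) (f i)
          = -∑ j ∈ Finset.univ.erase i, ev A x (∏ i ∈ S, (X - C (lam i x)) ^ N) (f j) := by
        rw [← Finset.add_sum_erase _ _ (Finset.mem_univ i)] at hwsum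
        exact eq_neg_of_add_eq_zero_left hwsum
      rw [heq]
      refine Submodule.neg_mem _ (Submodule.sum_mem _ fun j hj => ?_)
      exact le_iSup₂ (f := fun j (_ : j ≠ i) => eigenDist A (lam j) (ρ j) x) j
        (Finset.ne_of_mem_erase hj) (hwD j)
    have hdisj := (iSupIndep_def.mp hind) i
    exact (Submodule.mem_bot ℝ).mp (hdisj.le_bot (Submodule.mem_inf.mpr ⟨hwD i, hmem2⟩))
  rw [← hsum']
  refine Submodule.sum_mem _ fun i _ => ?_
  by_cases hiS : i ∈ S
  · exact le_iSup₂ (f := fun i (_ : i ∈ S) => eigenDist A (lam i) (ρ i) x) i hiS (hf i)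
  · have hf0 : f i = 0 :=
      prod_kill_inj (fun j hj => hdis j i hj) N S hiS (f i) (hf i) (hzero i)
    rw [hf0]
    exact Submodule.zero_mem _

end EigAux

/-- Spectral regularity of an operator field `A` on `U`: smooth pointwise-distinct
eigenvalue functions `lam i`, Riesz indices `ρ i ≥ 1` with
`ker (A−λᵢ)^{ρᵢ} = ker (A−λᵢ)^{ρᵢ+1}`, the dimension of each generalized
eigen-distribution constantly `r i`, and ℝⁿ the internal direct sum of them. -/
structure SpectralRegular {n : ℕ} (U : Set (Vec n)) (A : OpField n)
    (s : ℕ) (lam : Fin s → Vec n → ℝ) (ρ : Fin s → ℕ) (r : Fin s → ℕ) : Prop where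
  smooth_lam : ∀ i, ContDiffOn ℝ (⊤ : ℕ∞) (lam i) U
  distinct : ∀ i j, i ≠ j → ∀ x ∈ U, lam i x ≠ lam j x
  rho_pos : ∀ i, 1 ≤ ρ i
  riesz : ∀ i, ∀ x ∈ U, eigenDist A (lam i) (ρ i) x = eigenDist A (lam i) (ρ i + 1) x
  rank_const : ∀ i, ∀ x ∈ U, Module.finrank ℝ (eigenDist A (lam i) (ρ i) x) = r i
  direct : ∀ x ∈ U, DirectSum.IsInternal (fun i => eigenDist A (lam i) (ρ i) x)

/-- A distribution `x ↦ 𝒟(x) ⊆ ℝⁿ` is involutive on `U` if the Lie bracket of any two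
smooth vector fields taking values in it again takes values in it. -/
def Involutive {n : ℕ} (U : Set (Vec n)) (D : Vec n → Submodule ℝ (Vec n)) : Prop :=
  ∀ V W : VF n, ContDiffOn ℝ (⊤ : ℕ∞) V U → ContDiffOn ℝ (⊤ : ℕ∞) W U →
    (∀ x ∈ U, V x ∈ D x) → (∀ x ∈ U, W x ∈ D x) →
    ∀ x ∈ U, lieBracket V W x ∈ D x

/-- if A is spectrally regular and τ⁽ᵐ⁾_A ≡ 0 on U for some m ≥ 1, then
every direct sum ⊕_{i∈S} D_i of generalized eigen-distributions (S nonempty) is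
involutive; in particular each D_i is. -/
theorem eigenDist_sums_involutive {n : ℕ} (U : Set (Vec n)) (hU : IsOpen U)
    (A : OpField n) (hA : ContDiffOn ℝ (⊤ : ℕ∞) A U)
    (s : ℕ) (lam : Fin s → Vec n → ℝ) (ρ r : Fin s → ℕ)
    (hreg : SpectralRegular U A s lam ρ r)
    (m : ℕ) (hm : 1 ≤ m)
    (hvan : ∀ X Y : VF n, ContDiffOn ℝ (⊤ : ℕ∞) X U → ContDiffOn ℝ (⊤ : ℕ∞) Y U →
      ∀ x ∈ U, genTorsion A m X Y x = 0) :
    ∀ S : Finset (Fin s), S.Nonempty →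
      Involutive U (fun x => ⨆ i ∈ S, eigenDist A (lam i) (ρ i) x) := by
  intro S _ V W hV hW hVD hWD x hx
  have ha : ∀ y ∈ U, EigAux.ev A y
      (∏ i ∈ S, (Polynomial.X - Polynomial.C (lam i y)) ^ ρ i) (V y) = 0 :=
    fun y hy => EigAux.annihilate_of_mem_iSup lam ρ S y (hVD y hy)
  have hb : ∀ y ∈ U, EigAux.ev A y
      (∏ i ∈ S, (Polynomial.X - Polynomial.C (lam i y)) ^ ρ i) (W y) = 0 :=
    fun y hy => EigAux.annihilate_of_mem_iSup lam ρ S y (hWD y hy)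
  obtain ⟨N, hN⟩ := EigAux.key hU hA lam hreg.smooth_lam S m hvan m 0 (Nat.zero_add m)
    ((∑ i ∈ S, ρ i) + (∑ i ∈ S, ρ i)) ρ ρ V W le_rfl hV hW ha hb
  have h0 : genTorsion A 0 V W x = lieBracket V W x := rfl
  refine EigAux.mem_iSup_of_annihilate (fun i j hij => hreg.distinct i j hij x hx)
    (hreg.direct x hx) S N ?_
  rw [← h0]
  exact hN x hx
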